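/- Let (D, F) be a consistent classical-deterministic causal model, let s be a source vertex of D, fix o_s ∈ O_s, and let F' be the reduced model parameters on V ∖ {s} (partial application ω_v(o_s, ·) for children of s, ω_v otherwise). Then the dependency graph G of F' (edge ℓ → v iff ω'_v depends nontrivially on its O_ℓ-coordinate) is a siblings-on-cycles graph: every directed cycle of G contains two vertices that share a common parent in G. -/

import Mathlib

set_option autoImplicit false

/-- A function `f` on a dependent product depends only on the coordinates in `S`:
its value is unchanged when the argument is modified outside of `S`. -/
def DependsOnlyOn {V : Type} {O : V → Type} {α : Type} (f : (∀ v, O v) → α) (S : Set V) : Prop :=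
  ∀ o o' : ∀ v, O v, (∀ v ∈ S, o v = o' v) → f o = f o'

/-- A function `f` on a dependent product depends nontrivially on the coordinate `ℓ`:
there are two arguments that differ only at `ℓ` and get assigned different values. -/
def NontrivDependsOn {V : Type} {O : V → Type} {α : Type} (f : (∀ v, O v) → α) (ℓ : V) : Prop :=
  ∃ o o' : ∀ v, O v, (∀ k, k ≠ ℓ → o k = o' k) ∧ f o ≠ f o'

/-- `c` is a directed cycle (of length `n`, with pairwise distinct vertices) in the
digraph with edge relation `E`. -/
def IsDirCycle {V : Type} (E : V → V → Prop) {n : ℕ} (c : ZMod n → V) : Prop :=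
  0 < n ∧ Function.Injective c ∧ ∀ i, E (c i) (c (i + 1))

/-- The directed cycle `c` has a chord: an edge `c i → c j` with `j ≠ i + 1 (mod n)`. -/
def HasChord {V : Type} (E : V → V → Prop) {n : ℕ} (c : ZMod n → V) : Prop :=
  ∃ i j : ZMod n, E (c i) (c j) ∧ j ≠ i + 1

/-- A digraph is a siblings-on-cycles graph if every directed cycle contains two
(distinct) vertices that share a common parent. -/
def SiblingsOnCycles {V : Type} (E : V → V → Prop) : Prop :=
  ∀ (n : ℕ) (c : ZMod n → V), IsDirCycle E c →
    ∃ i j : ZMod n, i ≠ j ∧ ∃ p, E p (c i) ∧ E p (c j)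

open Classical in
/-- The deterministic correlation `p(a|x) = [g(x) = a]` induced by a function `g`. -/
noncomputable def detCorr {V : Type} {X A : V → Type} (g : (∀ v, X v) → ∀ v, A v) :
    (∀ v, X v) → (∀ v, A v) → ℝ :=
  fun x a => if a = g x then 1 else 0

/-- A classical-deterministic causal model: a finite vertex set `V`, a digraph `E`
(the causal structure), finite nonempty output- and input-sets `O v`, `I v`, and the
model parameters `ω v : (∀ ℓ, O ℓ) → I v`.  (That `ω v` only depends on the
coordinates of the parents of `v` is expressed by `StructComp` below.) -/
structure CDModel where
  V : Type
  [fintV : Fintype V]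
  [decV : DecidableEq V]
  E : V → V → Prop
  O : V → Type
  I : V → Type
  [fintO : ∀ v, Fintype (O v)]
  [neO : ∀ v, Nonempty (O v)]
  [fintI : ∀ v, Fintype (I v)]
  [neI : ∀ v, Nonempty (I v)]
  ω : ∀ v, (∀ ℓ, O ℓ) → I v

attribute [instance] CDModel.fintV CDModel.decV CDModel.fintO CDModel.neO CDModel.fintI CDModel.neI

namespace CDModel

variable (M : CDModel)

/-- The parents of `v`. -/
def Pa (v : M.V) : Set M.V := {k | M.E k v}

/-- The children of `s`. -/
def Ch (s : M.V) : Set M.V := {v | M.E s v}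

/-- A source vertex: a vertex without parents. -/
def IsSource (s : M.V) : Prop := ∀ k, ¬ M.E k s

/-- The digraph `E` is a causal structure for the model parameters, i.e. each `ω v`
is a function of the outputs of the parents of `v` only. -/
def StructComp : Prop := ∀ v, DependsOnlyOn (M.ω v) (M.Pa v)

/-- Faithfulness: each `ω v` depends nontrivially on each of the parents of `v`. -/
def Faithful : Prop := ∀ ℓ v, M.E ℓ v → NontrivDependsOn (M.ω v) ℓ

open Classical in
/-- `g` witnesses the consistency condition for the interventions `μ`: for all
settings `x` and results `a`, the number of pairs `(i, o)` with `ω v o = i v` and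
`μ v (x v, i v) = (a v, o v)` (for all `v`) is `1` if `a = g x` and `0` otherwise. -/
def IsWitness (X A : M.V → Type) (μ : ∀ v, X v × M.I v → A v × M.O v)
    (g : (∀ v, X v) → ∀ v, A v) : Prop :=
  ∀ (x : ∀ v, X v) (a : ∀ v, A v),
    Nat.card {io : (∀ v, M.I v) × (∀ v, M.O v) //
      (∀ v, M.ω v io.2 = io.1 v) ∧ ∀ v, μ v (x v, io.1 v) = (a v, io.2 v)} =
    if a = g x then 1 else 0

/-- Consistency: every family of interventions admits a witnessing function `g`. -/
def Consistent : Prop :=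
  ∀ (X A : M.V → Type)
    (_ : ∀ v, Fintype (X v)) (_ : ∀ v, Nonempty (X v))
    (_ : ∀ v, Fintype (A v)) (_ : ∀ v, Nonempty (A v))
    (μ : ∀ v, X v × M.I v → A v × M.O v),
    ∃ g : (∀ v, X v) → ∀ v, A v, M.IsWitness X A μ g

/-- Extend an assignment of outputs on `V ∖ {s}` to all of `V` by putting `os` at `s`. -/
def extendAt (s : M.V) (os : M.O s) (o : ∀ v : {v : M.V // v ≠ s}, M.O v.1) (ℓ : M.V) :
    M.O ℓ :=
  if h : ℓ = s then cast (congrArg M.O h.symm) os else o ⟨ℓ, h⟩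

/-- The reduced causal model obtained by fixing the output `os` of the source `s`:
the vertex `s` and all its incident edges are removed, and each model parameter is
partially applied at the coordinate `s` (which keeps `ω v` unchanged for non-children
of `s`). -/
def reduce (s : M.V) (os : M.O s) : CDModel where
  V := {v : M.V // v ≠ s}
  E := fun a b => M.E a.1 b.1
  O := fun v => M.O v.1
  I := fun v => M.I v.1
  ω := fun v o => M.ω v.1 (M.extendAt s os o)

/-- The dependency graph of the model parameters: edge `ℓ → v` iff `ω v` depends
nontrivially on its `O ℓ`-coordinate. -/
def depGraph : M.V → M.V → Prop := fun ℓ v => NontrivDependsOn (M.ω v) ℓ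

/-- Replace the causal structure by the dependency graph of the model parameters. -/
def restrictDep : CDModel where
  V := M.V
  E := M.depGraph
  O := M.O
  I := M.I
  ω := M.ω

/-- One step of the flow: fix an output value of a source, pass to the reduced model,
and restrict its causal structure to the dependency graph of the reduced parameters. -/
def flowStep (s : M.V) (os : M.O s) : CDModel := (M.reduce s os).restrictDep

end CDModel

/-- Reachability of one causal model from another by a finite sequence of flow steps,
each fixing an output value of a source vertex of the current causal structure. -/
inductive Reaches : CDModel → CDModel → Prop where
  | refl (M : CDModel) : Reaches M M
  | tail {M N : CDModel} (s : M.V) (hs : M.IsSource s) (os : M.O s)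
      (h : Reaches (M.flowStep s os) N) : Reaches M N

/-- Causal correlations, defined recursively: a family of correlations on at most one
agent is causal; and a correlation is causal if it decomposes as a convex combination
over a first agent `v` of a local conditional distribution for `v` times correlations
for the remaining agents (depending on `v`'s setting and result) that are again causal. -/
inductive IsCausal : ∀ (S : Type) (X A : S → Type), ((∀ v, X v) → (∀ v, A v) → ℝ) → Prop where
  | base {S : Type} [Fintype S] {X A : S → Type}
      (p : (∀ v, X v) → (∀ v, A v) → ℝ) (h : Fintype.card S ≤ 1) : IsCausal S X A p
  | step {S : Type} [Fintype S] [DecidableEq S] {X A : S → Type} [∀ v, Fintype (A v)]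
      (p : (∀ v, X v) → (∀ v, A v) → ℝ)
      (q : S → ℝ) (hq0 : ∀ v, 0 ≤ q v) (hq1 : ∑ v, q v = 1)
      (pv : ∀ v : S, X v → A v → ℝ)
      (hpv0 : ∀ v x a, 0 ≤ pv v x a) (hpv1 : ∀ v x, ∑ a, pv v x a = 1)
      (pr : ∀ v : S, X v → A v →
        (∀ u : {u : S // u ≠ v}, X u.1) → (∀ u : {u : S // u ≠ v}, A u.1) → ℝ)
      (hpr : ∀ v xv av, IsCausal {u : S // u ≠ v} (fun u => X u.1) (fun u => A u.1) (pr v xv av))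
      (hdec : ∀ x a, p x a =
        ∑ v, q v * pv v (x v) (a v) * pr v (x v) (a v) (fun u => x u.1) (fun u => a u.1)) :
      IsCausal S X A p

/-- Convenience constructor for classical-deterministic causal models. -/
abbrev mkModel (V : Type) [Fintype V] [DecidableEq V] (E : V → V → Prop) (O I : V → Type)
    [∀ v, Fintype (O v)] [∀ v, Nonempty (O v)] [∀ v, Fintype (I v)] [∀ v, Nonempty (I v)]
    (ω : ∀ v, (∀ ℓ, O ℓ) → I v) : CDModel :=
  { V := V, E := E, O := O, I := I, ω := ω }

/-- Any function on a finite dependent product depends only on the set of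
coordinates on which it depends nontrivially. -/
lemma dependsOnlyOn_depSet {V : Type} [Fintype V] {O : V → Type} {α : Type}
    (f : (∀ v, O v) → α) : DependsOnlyOn f {ℓ | NontrivDependsOn f ℓ} := by
  classical
  suffices h : ∀ (t : Finset V) (o o' : ∀ v, O v), (∀ v, v ∉ t → o v = o' v) →
      (∀ v ∈ t, ¬ NontrivDependsOn f v) → f o = f o' by
    intro o o' ho
    refine h (Finset.univ.filter fun v => ¬ NontrivDependsOn f v) o o' ?_ ?_
    · intro v hv
      refine ho v (of_not_not fun hd => hv ?_)
      exact Finset.mem_filter.2 ⟨Finset.mem_univ v, hd⟩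
    · intro v hv; exact (Finset.mem_filter.1 hv).2
  intro t
  induction t using Finset.induction_on with
  | empty =>
    intro o o' h _
    exact congrArg f (funext fun v => h v (Finset.notMem_empty v))
  | @insert a t ha ih =>
    intro o o' h hnd
    have h1 : f o = f (Function.update o a (o' a)) := by
      by_contra hne
      exact hnd a (Finset.mem_insert_self a t)
        ⟨o, Function.update o a (o' a),
          fun k hk => (Function.update_of_ne hk _ _).symm, hne⟩
    rw [h1]
    refine ih _ _ ?_ (fun v hv => hnd v (Finset.mem_insert_of_mem hv))
    intro v hv
    by_cases hva : v = a
    · subst hva; rw [Function.update_self]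
    · rw [Function.update_of_ne hva]
      exact h v (fun hm => ((Finset.mem_insert.1 hm).elim hva hv))

/-- **The reduced dependency graph is siblings-on-cycles.**
Let `(D, F)` be a consistent causal model, `s` a source, and `o_s ∈ O_s`.  Then the
dependency graph of the reduced model parameters is a siblings-on-cycles graph. -/
theorem stmt5 (M : CDModel) (hstruct : M.StructComp) (hcons : M.Consistent)
    (s : M.V) (hs : M.IsSource s) (os : M.O s) :
    SiblingsOnCycles ((M.reduce s os).depGraph) := by
  classical
  set N := M.reduce s os with hNdef
  intro n c hc
  by_contra hsib
  push_neg at hsib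
  obtain ⟨hn, hinj, hcyc⟩ := hc
  haveI : NeZero n := ⟨hn.ne'⟩
  -- no two distinct cycle vertices share a parent
  have hno : ∀ (p : N.V) (i j : ZMod n), N.depGraph p (c i) → N.depGraph p (c j) → i = j := by
    intro p i j h1 h2
    by_contra hij
    exact hsib i j hij p h1 h2
  -- choose witnesses of the nontrivial dependencies along the cycle
  have hdep : ∀ j : ZMod n, ∃ o o' : ∀ v : N.V, N.O v,
      (∀ k, k ≠ c j → o k = o' k) ∧ N.ω (c (j+1)) o ≠ N.ω (c (j+1)) o' :=
    fun j => hcyc j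
  choose bg bg' hbg hne using hdep
  -- the transfer functions along the cycle edges
  obtain ⟨φ, hφdef⟩ : ∃ φ : ∀ j : ZMod n, N.O (c j) → N.I (c (j+1)),
      ∀ j t, φ j t = N.ω (c (j+1)) (Function.update (bg j) (c j) t) :=
    ⟨_, fun _ _ => rfl⟩
  have hqrne : ∀ j : ZMod n, bg j (c j) ≠ bg' j (c j) := by
    intro j heq
    apply hne j
    have : bg j = bg' j := by
      funext k
      by_cases hk : k = c j
      · subst hk; exact heq
      · exact hbg j k hk
    rw [this]
  have hφq : ∀ j : ZMod n, φ j (bg j (c j)) = N.ω (c (j+1)) (bg j) := by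
    intro j; rw [hφdef, Function.update_eq_self]
  have hφr : ∀ j : ZMod n, φ j (bg' j (c j)) = N.ω (c (j+1)) (bg' j) := by
    intro j; rw [hφdef]
    congr 1
    funext k
    by_cases hk : k = c j
    · subst hk; rw [Function.update_self]
    · rw [Function.update_of_ne hk]; exact hbg j k hk
  have hφne : ∀ j : ZMod n, φ j (bg j (c j)) ≠ φ j (bg' j (c j)) := by
    intro j h
    apply hne j
    rw [← hφq, ← hφr]; exact h
  -- the background values at non-cycle vertices
  obtain ⟨B, hB⟩ : ∃ B : ∀ v : N.V, N.O v,
      ∀ (j : ZMod n) (v : N.V), N.depGraph v (c (j+1)) → B v = bg j v := by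
    refine ⟨fun v => if h : ∃ j : ZMod n, N.depGraph v (c (j+1)) then bg h.choose v
      else Classical.arbitrary _, ?_⟩
    intro j v hv
    have hex : ∃ j' : ZMod n, N.depGraph v (c (j'+1)) := ⟨j, hv⟩
    beta_reduce
    rw [dif_pos hex]
    have hcj : hex.choose = j := add_right_cancel (hno v (hex.choose+1) (j+1) hex.choose_spec hv)
    rw [hcj]
  -- the local response functions on the reduced model
  obtain ⟨g', hg1, hg2⟩ : ∃ g' : ∀ v : N.V, N.I v → N.O v,
      (∀ (j : ZMod n) (ι : N.I (c (j+1))), g' (c (j+1)) ι =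
        if ι = φ j (bg' j (c j)) then
          (if j+1 = 0 then bg (j+1) (c (j+1)) else bg' (j+1) (c (j+1)))
        else
          (if j+1 = 0 then bg' (j+1) (c (j+1)) else bg (j+1) (c (j+1)))) ∧
      (∀ v : N.V, (∀ k, c k ≠ v) → ∀ ι, g' v ι = B v) := by
    have key : ∀ (k j : ZMod n) (e : c (k+1) = c (j+1)) (ι : N.I (c (j+1))),
        cast (congrArg N.O e) (
          if cast (congrArg N.I e.symm) ι = φ k (bg' k (c k)) then
            (if k+1 = 0 then bg (k+1) (c (k+1)) else bg' (k+1) (c (k+1)))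
          else
            (if k+1 = 0 then bg' (k+1) (c (k+1)) else bg (k+1) (c (k+1)))) =
        (if ι = φ j (bg' j (c j)) then
          (if j+1 = 0 then bg (j+1) (c (j+1)) else bg' (j+1) (c (j+1)))
        else
          (if j+1 = 0 then bg' (j+1) (c (j+1)) else bg (j+1) (c (j+1)))) := by
      intro k j e ι
      obtain rfl : k = j := add_right_cancel (hinj e)
      rfl
    refine ⟨fun v ι => if h : ∃ j : ZMod n, c (j+1) = v then
        cast (congrArg N.O h.choose_spec) (
          if cast (congrArg N.I h.choose_spec.symm) ι = φ h.choose (bg' h.choose (c h.choose)) then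
            (if h.choose+1 = 0 then bg (h.choose+1) (c (h.choose+1))
              else bg' (h.choose+1) (c (h.choose+1)))
          else
            (if h.choose+1 = 0 then bg' (h.choose+1) (c (h.choose+1))
              else bg (h.choose+1) (c (h.choose+1))))
      else B v, ?_, ?_⟩
    · intro j ι
      have hex : ∃ k : ZMod n, c (k+1) = c (j+1) := ⟨j, rfl⟩
      beta_reduce
      rw [dif_pos hex]
      exact key hex.choose j hex.choose_spec ι
    · intro v hv ι
      beta_reduce
      rw [dif_neg]
      rintro ⟨k, hk⟩
      exact hv (k+1) hk
  -- the local response functions on the full model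
  obtain ⟨F, hFs, hFv⟩ : ∃ F : ∀ v : M.V, M.I v → M.O v,
      (∀ i, F s i = os) ∧ (∀ (v : {v : M.V // v ≠ s}) (i : M.I v.1), F v.1 i = g' v i) := by
    refine ⟨fun v ι => if h : v = s then cast (congrArg M.O h.symm) os else g' ⟨v, h⟩ ι, ?_, ?_⟩
    · intro i; beta_reduce; exact dif_pos rfl
    · intro v i; beta_reduce; exact dif_neg v.2
  -- apply consistency with trivial settings and outcomes
  obtain ⟨g0, hw⟩ := hcons (fun _ => PUnit) (fun _ => PUnit)
    (fun _ => inferInstance) (fun _ => inferInstance)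
    (fun _ => inferInstance) (fun _ => inferInstance)
    (fun v xi => (PUnit.unit, F v xi.2))
  have h1 := hw (fun _ => PUnit.unit) (fun _ => PUnit.unit)
  rw [if_pos (funext fun v => Subsingleton.elim _ _)] at h1
  obtain ⟨⟨⟨i0, o⟩, hio1, hio2⟩⟩ := (Nat.card_eq_one_iff_unique.mp h1).2
  -- the fixed-point equations
  have hfix : ∀ v, o v = F v (M.ω v o) := by
    intro v
    have h2 : F v (i0 v) = o v := congrArg Prod.snd (hio2 v)
    exact h2.symm.trans (congrArg (F v) (hio1 v).symm)
  obtain ⟨oR, hoR⟩ : ∃ oR : ∀ v : N.V, N.O v, ∀ v, oR v = o v.1 := ⟨_, fun _ => rfl⟩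
  have hos : o s = os := by
    have h1 := hfix s
    rw [hFs] at h1
    exact h1
  have hext : ∀ w : N.V, N.ω w oR = M.ω w.1 o := by
    have hex0 : M.extendAt s os oR = o := by
      funext ℓ
      simp only [CDModel.extendAt]
      by_cases h : ℓ = s
      · subst h
        exact (dif_pos rfl).trans hos.symm
      · exact (dif_neg h).trans (hoR ⟨ℓ, h⟩)
    intro w
    show M.ω w.1 (M.extendAt s os oR) = M.ω w.1 o
    rw [hex0]
  have hnoncyc : ∀ v : N.V, (∀ k, c k ≠ v) → oR v = B v := by
    intro v hv
    have h1 := hfix v.1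
    rw [hFv v] at h1
    have h1 := h1.trans (hg2 v hv _)
    exact (hoR v).trans h1
  have hω : ∀ j : ZMod n, N.ω (c (j+1)) oR = φ j (oR (c j)) := by
    intro j
    rw [hφdef]
    refine dependsOnlyOn_depSet (N.ω (c (j+1))) oR _ ?_
    intro p hp
    by_cases hpc : p = c j
    · subst hpc; rw [Function.update_self]
    · rw [Function.update_of_ne hpc]
      by_cases hcy : ∃ k, c k = p
      · obtain ⟨k, rfl⟩ := hcy
        have : k + 1 = j + 1 := hno (c k) (k+1) (j+1) (hcyc k) hp
        exact absurd (add_right_cancel this) (fun h => hpc (by rw [h]))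
      · push_neg at hcy
        rw [hnoncyc p hcy]
        exact hB j p hp
  have hstep : ∀ j : ZMod n, oR (c (j+1)) =
      if φ j (oR (c j)) = φ j (bg' j (c j)) then
        (if j+1 = 0 then bg (j+1) (c (j+1)) else bg' (j+1) (c (j+1)))
      else
        (if j+1 = 0 then bg' (j+1) (c (j+1)) else bg (j+1) (c (j+1))) := by
    intro j
    have h1 := hfix (c (j+1)).1
    rw [hFv (c (j+1))] at h1
    rw [← hext (c (j+1))] at h1
    rw [hω j] at h1
    rw [hg1 j] at h1
    exact (hoR (c (j+1))).trans h1
  have hrange : ∀ k : ZMod n, oR (c k) = bg k (c k) ∨ oR (c k) = bg' k (c k) := by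
    intro k
    have h2 : oR (c (k-1+1)) = bg (k-1+1) (c (k-1+1)) ∨
        oR (c (k-1+1)) = bg' (k-1+1) (c (k-1+1)) := by
      rw [hstep (k-1)]
      split_ifs <;> simp
    rw [sub_add_cancel] at h2
    exact h2
  have hforward : ∀ j : ZMod n, j + 1 ≠ 0 →
      ((oR (c (j+1)) = bg (j+1) (c (j+1))) ↔ (oR (c j) = bg j (c j))) := by
    intro j hj0
    constructor
    · intro h1
      by_contra h2
      have h3 : oR (c j) = bg' j (c j) := (hrange j).resolve_left h2
      have h4 := hstep j
      rw [h3, if_pos rfl, if_neg hj0] at h4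
      exact hqrne (j+1) (h1.symm.trans h4)
    · intro h1
      have h4 := hstep j
      rw [h1, if_neg (hφne j), if_neg hj0] at h4
      exact h4
  have hflip : ∀ j : ZMod n, j + 1 = 0 →
      ((oR (c (j+1)) = bg (j+1) (c (j+1))) ↔ ¬ (oR (c j) = bg j (c j))) := by
    intro j hj0
    constructor
    · intro h1 h2
      have h4 := hstep j
      rw [h2, if_neg (hφne j), if_pos hj0] at h4
      exact hqrne (j+1) (h1.symm.trans h4)
    · intro h2
      have h3 : oR (c j) = bg' j (c j) := (hrange j).resolve_left h2
      have h4 := hstep j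
      rw [h3, if_pos rfl, if_pos hj0] at h4
      exact h4
  have hind : ∀ k : ℕ, k < n →
      ((oR (c (k : ZMod n)) = bg (k : ZMod n) (c (k : ZMod n))) ↔
        (oR (c 0) = bg 0 (c 0))) := by
    intro k
    induction k with
    | zero => intro _; rw [Nat.cast_zero]
    | succ k ih =>
      intro hk
      have hk' : k < n := Nat.lt_of_succ_lt hk
      have hne0 : (k : ZMod n) + 1 ≠ 0 := by
        intro h
        have h5 : ((k+1 : ℕ) : ZMod n) = 0 := by push_cast; exact h
        rw [ZMod.natCast_eq_zero_iff] at h5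
        exact absurd (Nat.le_of_dvd (Nat.succ_pos k) h5) (not_le.2 hk)
      rw [Nat.cast_succ]
      exact (hforward k hne0).trans (ih hk')
  have hm1 : ((n - 1 : ℕ) : ZMod n) = -1 := by
    have h1 : ((n - 1 : ℕ) : ZMod n) + 1 = 0 := by
      have h2 : (((n - 1) + 1 : ℕ) : ZMod n) = 0 := by
        rw [Nat.sub_add_cancel hn, ZMod.natCast_self]
      push_cast at h2
      exact h2
    exact eq_neg_of_add_eq_zero_left h1
  have hlast := hind (n-1) (Nat.sub_lt hn Nat.one_pos)
  rw [hm1] at hlast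
  have hfl := hflip (-1) (neg_add_cancel 1)
  rw [neg_add_cancel] at hfl
  rw [hlast] at hfl
  exact iff_not_self hfl
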